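/- Let R be a commutative ring, M an R-module, Q a quadratic form on M, and n an even natural number. Let e : Fin n → M be an R-basis of M whose vectors are pairwise Q-orthogonal (the polar form of Q vanishes on (e i, e j) for i ≠ j), and let ω = ι(e 0)·ι(e 1)⋯ι(e (n−1)) be the volume element in the Clifford algebra of Q. Then ω commutes with every element of the even part evenOdd Q 0 of the Clifford algebra, and ω·x = −x·ω for every element x of the odd part evenOdd Q 1. -/

import Mathlib

open CliffordAlgebra

private lemma aux_anti {R M : Type*} [CommRing R] [AddCommGroup M] [Module R M]
    {Q : QuadraticForm R M} {n : ℕ} (b : Module.Basis (Fin n) R M)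
    (horth : ∀ i j, i ≠ j → QuadraticMap.polar Q (b i) (b j) = 0)
    {i j : Fin n} (hij : i ≠ j) :
    ι Q (b i) * ι Q (b j) = -(ι Q (b j) * ι Q (b i)) := by
  have := ι_mul_ι_add_swap (Q := Q) (b i) (b j)
  rw [horth i j hij] at this
  simpa using eq_neg_of_add_eq_zero_left (by simpa using this)

private lemma aux_not_mem {R M : Type*} [CommRing R] [AddCommGroup M] [Module R M]
    {Q : QuadraticForm R M} {n : ℕ} (b : Module.Basis (Fin n) R M)
    (horth : ∀ i j, i ≠ j → QuadraticMap.polar Q (b i) (b j) = 0)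
    (j : Fin n) (l : List (Fin n)) (hl : j ∉ l) :
    (l.map (fun i => ι Q (b i))).prod * ι Q (b j)
      = ((-1 : ℤ) ^ l.length) • (ι Q (b j) * (l.map (fun i => ι Q (b i))).prod) := by
  induction l with
  | nil => simp
  | cons i t ih =>
    have hij : i ≠ j := fun h => hl (h ▸ List.mem_cons_self)
    have ht : j ∉ t := fun h => hl (List.mem_cons_of_mem _ h)
    simp only [List.map_cons, List.prod_cons, List.length_cons]
    rw [mul_assoc, ih ht, mul_smul_comm, ← mul_assoc, aux_anti b horth hij, neg_mul, smul_neg,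
      mul_assoc, pow_succ, mul_neg_one, neg_smul]

private lemma aux_mem {R M : Type*} [CommRing R] [AddCommGroup M] [Module R M]
    {Q : QuadraticForm R M} {n : ℕ} (b : Module.Basis (Fin n) R M)
    (horth : ∀ i j, i ≠ j → QuadraticMap.polar Q (b i) (b j) = 0)
    (j : Fin n) (l : List (Fin n)) (hnd : l.Nodup) (hl : j ∈ l) :
    (l.map (fun i => ι Q (b i))).prod * ι Q (b j)
      = ((-1 : ℤ) ^ (l.length - 1))
          • (ι Q (b j) * (l.map (fun i => ι Q (b i))).prod) := by
  induction l with
  | nil => simp at hl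
  | cons i t ih =>
    simp only [List.map_cons, List.prod_cons, List.length_cons, Nat.add_sub_cancel]
    rcases List.mem_cons.mp hl with h | h
    · subst h
      have ht : j ∉ t := (List.nodup_cons.mp hnd).1
      rw [mul_assoc, aux_not_mem b horth j t ht, mul_smul_comm]
    · have hij : i ≠ j := fun e => (List.nodup_cons.mp hnd).1 (e ▸ h)
      have ht1 : 1 ≤ t.length := List.length_pos_iff.mpr (List.ne_nil_of_mem h)
      rw [mul_assoc, ih (List.nodup_cons.mp hnd).2 h, mul_smul_comm, ← mul_assoc,
        aux_anti b horth hij, neg_mul, smul_neg, mul_assoc]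
      have hlen : t.length = (t.length - 1) + 1 := by omega
      conv_rhs => rw [hlen]
      rw [pow_succ, mul_neg_one, neg_smul]

/-- For `n` even and an orthogonal basis `b` of `M`, the volume element
`ω = ι(b 0)⋯ι(b (n-1))` commutes with the even part and anti-commutes with the
odd part of the Clifford algebra of `Q`. -/
theorem stmt_6 {R M : Type*} [CommRing R] [AddCommGroup M] [Module R M]
    (Q : QuadraticForm R M) (n : ℕ) (hn : Even n) (b : Module.Basis (Fin n) R M)
    (horth : ∀ i j, i ≠ j → QuadraticMap.polar Q (b i) (b j) = 0) :
    (∀ x ∈ CliffordAlgebra.evenOdd Q 0,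
        ((List.finRange n).map (fun i => CliffordAlgebra.ι Q (b i))).prod * x
          = x * ((List.finRange n).map (fun i => CliffordAlgebra.ι Q (b i))).prod) ∧
    (∀ x ∈ CliffordAlgebra.evenOdd Q 1,
        ((List.finRange n).map (fun i => CliffordAlgebra.ι Q (b i))).prod * x
          = -(x * ((List.finRange n).map (fun i => CliffordAlgebra.ι Q (b i))).prod)) := by
  set ω := ((List.finRange n).map (fun i => CliffordAlgebra.ι Q (b i))).prod with hω
  have key : ∀ m : M, ω * ι Q m = -(ι Q m * ω) := by
    have h : (LinearMap.mulLeft R ω ∘ₗ ι Q) = (-(LinearMap.mulRight R ω ∘ₗ ι Q) : M →ₗ[R] _) := by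
      apply b.ext
      intro j
      simp only [LinearMap.comp_apply, LinearMap.neg_apply, LinearMap.mulLeft_apply,
        LinearMap.mulRight_apply]
      rw [hω, aux_mem b horth j _ (List.nodup_finRange n) (List.mem_finRange j),
        List.length_finRange]
      have hodd : Odd (n - 1) := Nat.Even.sub_odd j.pos hn odd_one
      rw [Odd.neg_one_pow hodd, neg_smul, one_smul]
    intro m
    simpa using LinearMap.congr_fun h m
  constructor
  · intro x hx
    induction x, hx using CliffordAlgebra.even_induction with
    | algebraMap r => exact (Algebra.commutes r ω).symm
    | add x y hx hy ihx ihy => rw [mul_add, add_mul, ihx, ihy]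
    | ι_mul_ι_mul m₁ m₂ x hx ih =>
      rw [← mul_assoc, ← mul_assoc, key m₁, neg_mul, neg_mul, mul_assoc (ι Q m₁) ω (ι Q m₂),
        key m₂, mul_neg, neg_mul, neg_neg]
      simp only [mul_assoc]
      rw [ih]
  · intro x hx
    induction x, hx using CliffordAlgebra.odd_induction with
    | ι v => exact key v
    | add x y hx hy ihx ihy => rw [mul_add, add_mul, ihx, ihy, neg_add]
    | ι_mul_ι_mul m₁ m₂ x hx ih =>
      rw [← mul_assoc, ← mul_assoc, key m₁, neg_mul, neg_mul, mul_assoc (ι Q m₁) ω (ι Q m₂),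
        key m₂, mul_neg, neg_mul, neg_neg]
      simp only [mul_assoc, mul_neg]
      rw [ih]
      simp only [mul_neg]
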